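/- Let F be a field of characteristic 0, φ ∈ F[x,y,z] with highest-degree homogeneous component φ̄ of positive degree, and let f = x - 2yφ - zφ², g = y + zφ, h = z. Then the highest-degree homogeneous components satisfy f̄ = -z·φ̄², ḡ = z·φ̄, h̄ = z. -/

import Mathlib

open MvPolynomial

section Aux

variable {σ : Type*} {R : Type*}

/-- If `p = A + B` with `A` homogeneous of degree `n`, `A ≠ 0` and `deg B < n`,
then `deg p = n` and the top homogeneous component of `p` is `A`. -/
lemma nagata_aux [CommRing R] {A B : MvPolynomial σ R} {n : ℕ}
    (hA : A.IsHomogeneous n) (hA0 : A ≠ 0) (hB : B.totalDegree < n) :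
    (A + B).totalDegree = n ∧ homogeneousComponent n (A + B) = A := by
  have hcomp : homogeneousComponent n (A + B) = A := by
    rw [map_add, homogeneousComponent_eq_zero _ _ hB,
      homogeneousComponent_of_mem ((mem_homogeneousSubmodule n A).2 hA), if_pos rfl, add_zero]
  refine ⟨le_antisymm ?_ ?_, hcomp⟩
  · exact (totalDegree_add A B).trans (max_le (hA.totalDegree_le) hB.le)
  · by_contra hlt
    push_neg at hlt
    exact hA0 (hcomp ▸ homogeneousComponent_eq_zero _ _ hlt)

lemma nagata_tail_lt [CommRing R] {p : MvPolynomial σ R} {n : ℕ}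
    (hp : 0 < n) (hn : p.totalDegree ≤ n) :
    (p - homogeneousComponent n p).totalDegree < n := by
  by_cases h0 : p - homogeneousComponent n p = 0
  · simpa [h0] using hp
  · rw [Nat.lt_iff_le_pred hp]
    rw [totalDegree]
    apply Finset.sup_le
    intro d hd
    rw [mem_support_iff] at hd
    have hcd : coeff d (p - homogeneousComponent n p) = coeff d p - coeff d (homogeneousComponent n p) := by
      simp [coeff_sub]
    rw [coeff_homogeneousComponent] at hcd
    by_cases hdn : d.degree = n
    · rw [if_pos hdn, sub_self] at hcd; exact absurd hcd hd
    · rw [if_neg hdn, sub_zero] at hcd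
      have hds : d ∈ p.support := mem_support_iff.2 (hcd ▸ hd)
      have := le_totalDegree hds
      have hdeg : (d.sum fun _ e => e) = d.degree := rfl
      omega

lemma nagata_top_ne_zero [CommRing R] {p : MvPolynomial σ R} (hp : p ≠ 0) :
    homogeneousComponent p.totalDegree p ≠ 0 := by
  obtain ⟨d, hd, hdeq⟩ := Finset.exists_mem_eq_sup p.support
    (support_nonempty.mpr hp) (fun s => s.sum fun _ e => e)
  intro hz
  have : coeff d (homogeneousComponent p.totalDegree p) = coeff d p := by
    rw [coeff_homogeneousComponent, if_pos]
    rw [show d.degree = d.sum fun _ e => e from rfl]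
    exact hdeq.symm
  rw [hz, coeff_zero] at this
  exact mem_support_iff.1 hd this.symm

end Aux

/-- If deg φ > 0, the leading homogeneous components of the Nagata triple are
f̄ = -z φ̄², ḡ = z φ̄, h̄ = z. -/
theorem leading_components_of_nagata (F : Type*) [Field F] [CharZero F]
    (φ f g h : MvPolynomial (Fin 3) F)
    (hdeg : 0 < φ.totalDegree)
    (hf : f = X 0 - 2 * X 1 * φ - X 2 * φ ^ 2)
    (hg : g = X 1 + X 2 * φ)
    (hh : h = X 2) :
    homogeneousComponent f.totalDegree f =
      -(X 2 * (homogeneousComponent φ.totalDegree φ) ^ 2) ∧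
    homogeneousComponent g.totalDegree g = X 2 * homogeneousComponent φ.totalDegree φ ∧
    homogeneousComponent h.totalDegree h = X 2 := by
  have hφ0 : φ ≠ 0 := fun h0 => by simp [h0] at hdeg
  set d := φ.totalDegree with hd
  set P : MvPolynomial (Fin 3) F := homogeneousComponent d φ with hP
  set r : MvPolynomial (Fin 3) F := φ - P with hr
  have hP0 : P ≠ 0 := nagata_top_ne_zero hφ0
  have hPh : P.IsHomogeneous d := homogeneousComponent_isHomogeneous d φ
  have hrlt : r.totalDegree < d := nagata_tail_lt hdeg le_rfl
  have hφeq : φ = P + r := by rw [hr]; ring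
  have hX2 : (X 2 : MvPolynomial (Fin 3) F) ≠ 0 := X_ne_zero 2
  -- h
  have hhcase : homogeneousComponent h.totalDegree h = X 2 := by
    subst hh
    rw [totalDegree_X,
      homogeneousComponent_of_mem ((mem_homogeneousSubmodule 1 _).2 (isHomogeneous_X F 2)),
      if_pos rfl]
  -- g
  have hgA : (X 2 * P).IsHomogeneous (1 + d) := (isHomogeneous_X F 2).mul hPh
  have hgA0 : X 2 * P ≠ 0 := mul_ne_zero hX2 hP0
  have hgB : (X 1 + X 2 * r).totalDegree < 1 + d := by
    refine lt_of_le_of_lt (totalDegree_add _ _) ?_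
    rw [max_lt_iff]
    constructor
    · rw [totalDegree_X]; omega
    · calc (X 2 * r).totalDegree ≤ (X 2 : MvPolynomial (Fin 3) F).totalDegree + r.totalDegree :=
            totalDegree_mul _ _
        _ < 1 + d := by rw [totalDegree_X]; omega
  have hgeq : g = X 2 * P + (X 1 + X 2 * r) := by rw [hg, hφeq]; ring
  obtain ⟨hgdeg, hgcomp⟩ := nagata_aux hgA hgA0 hgB
  -- f
  have hfA : (-(X 2 * P ^ 2)).IsHomogeneous (1 + d * 2) :=
    ((isHomogeneous_X F 2).mul (hPh.pow 2)).neg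
  have hfA0 : -(X 2 * P ^ 2) ≠ 0 := by
    simp only [ne_eq, neg_eq_zero]
    exact mul_ne_zero hX2 (pow_ne_zero 2 hP0)
  have hfB : (X 0 - 2 * X 1 * φ - X 2 * (2 * P * r + r * r)).totalDegree < 1 + d * 2 := by
    have h1 : (X 0 : MvPolynomial (Fin 3) F).totalDegree < 1 + d * 2 := by
      rw [totalDegree_X]; omega
    have h2 : (2 * X 1 * φ : MvPolynomial (Fin 3) F).totalDegree < 1 + d * 2 := by
      calc (2 * X 1 * φ : MvPolynomial (Fin 3) F).totalDegree
          ≤ (2 * X 1 : MvPolynomial (Fin 3) F).totalDegree + φ.totalDegree := totalDegree_mul _ _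
        _ ≤ ((2 : MvPolynomial (Fin 3) F).totalDegree + (X 1 : MvPolynomial (Fin 3) F).totalDegree) + d :=
            Nat.add_le_add_right (totalDegree_mul _ _) d
        _ < 1 + d * 2 := by
            have h2' : (2 : MvPolynomial (Fin 3) F).totalDegree = 0 := by
              rw [show (2 : MvPolynomial (Fin 3) F) = C (2:F) by rw [map_ofNat]]
              exact totalDegree_C _
            rw [h2', totalDegree_X]; omega
    have h3 : (X 2 * (2 * P * r + r * r) : MvPolynomial (Fin 3) F).totalDegree < 1 + d * 2 := by
      calc (X 2 * (2 * P * r + r * r) : MvPolynomial (Fin 3) F).totalDegree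
          ≤ (X 2 : MvPolynomial (Fin 3) F).totalDegree + (2 * P * r + r * r).totalDegree :=
            totalDegree_mul _ _
        _ < 1 + d * 2 := by
            rw [totalDegree_X]
            have hPr : (2 * P * r : MvPolynomial (Fin 3) F).totalDegree < d * 2 := by
              calc (2 * P * r : MvPolynomial (Fin 3) F).totalDegree
                  ≤ (2 * P : MvPolynomial (Fin 3) F).totalDegree + r.totalDegree := totalDegree_mul _ _
                _ ≤ ((2 : MvPolynomial (Fin 3) F).totalDegree + P.totalDegree) + r.totalDegree :=
                    Nat.add_le_add_right (totalDegree_mul _ _) _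
                _ < d * 2 := by
                    have h2' : (2 : MvPolynomial (Fin 3) F).totalDegree = 0 := by
                      rw [show (2 : MvPolynomial (Fin 3) F) = C (2:F) by rw [map_ofNat]]
                      exact totalDegree_C _
                    have hPd : P.totalDegree ≤ d := hPh.totalDegree_le
                    omega
            have hrr : (r * r : MvPolynomial (Fin 3) F).totalDegree < d * 2 := by
              calc (r * r : MvPolynomial (Fin 3) F).totalDegree
                  ≤ r.totalDegree + r.totalDegree := totalDegree_mul _ _
                _ < d * 2 := by omega
            have := (totalDegree_add (2 * P * r : MvPolynomial (Fin 3) F) (r * r)).trans_lt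
              (max_lt hPr hrr)
            omega
    calc (X 0 - 2 * X 1 * φ - X 2 * (2 * P * r + r * r) : MvPolynomial (Fin 3) F).totalDegree
        ≤ max (X 0 - 2 * X 1 * φ : MvPolynomial (Fin 3) F).totalDegree
            (X 2 * (2 * P * r + r * r) : MvPolynomial (Fin 3) F).totalDegree := totalDegree_sub _ _
      _ < 1 + d * 2 := by
          have := (totalDegree_sub (X 0 : MvPolynomial (Fin 3) F) (2 * X 1 * φ)).trans_lt
            (max_lt h1 h2)
          omega
  have hfeq : f = -(X 2 * P ^ 2) + (X 0 - 2 * X 1 * φ - X 2 * (2 * P * r + r * r)) := by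
    rw [hf, hφeq]; ring
  obtain ⟨hfdeg, hfcomp⟩ := nagata_aux hfA hfA0 hfB
  exact ⟨by rw [hfeq, hfdeg, hfcomp], by rw [hgeq, hgdeg, hgcomp], hhcase⟩
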